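/- Zero-padding spectrum (in-band): let F : Fin M × Fin N → ℝ have i.i.d. entries with mean a, and let F̃ : Fin M' × Fin N' → ℝ (M' ≥ M, N' ≥ N) be its zero-padding. Let G and H denote the DFTs of F and F̃ respectively. Then for 0 ≤ u < M, 0 ≤ v < N with u/M' ∉ ℤ and v/N' ∉ ℤ, |E[H(u,v)] - E[G(u,v)]| = |a| · (|sin(Muπ/M')/sin(uπ/M')| · |sin(Nvπ/N')/sin(vπ/N')| - MN·δ_{uv}), where δ_{uv} = 1 iff (u,v)=(0,0). -/

import Mathlib

open Finset Complex MeasureTheory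

lemma abs_exp_mul_I_sub_one (φ : ℝ) :
    ‖Complex.exp ((φ : ℂ) * Complex.I) - 1‖ = 2 * |Real.sin (φ / 2)| := by
  have hre : (Complex.exp ((φ : ℂ) * Complex.I) - 1).re = Real.cos φ - 1 := by
    simp [Complex.exp_ofReal_mul_I_re]
  have him : (Complex.exp ((φ : ℂ) * Complex.I) - 1).im = Real.sin φ := by
    simp [Complex.exp_ofReal_mul_I_im]
  have hsq : ‖Complex.exp ((φ : ℂ) * Complex.I) - 1‖^2
      = (2 * |Real.sin (φ / 2)|)^2 := by
    rw [Complex.sq_norm, Complex.normSq_apply, hre, him]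
    have h1 : Real.sin (φ/2)^2 = 1 - Real.cos (φ/2)^2 := Real.sin_sq _
    have h1' : Real.cos (φ/2)^2 = 1/2 + Real.cos (2 * (φ/2)) / 2 := Real.cos_sq _
    have h2 : Real.sin φ ^2 + Real.cos φ ^2 = 1 := Real.sin_sq_add_cos_sq φ
    have h3 : |Real.sin (φ/2)|^2 = Real.sin (φ/2)^2 := sq_abs _
    have h4 : 2 * (φ/2) = φ := by ring
    rw [h4] at h1'
    nlinarith
  have h0 : (0:ℝ) ≤ 2 * |Real.sin (φ / 2)| := by positivity
  nlinarith [norm_nonneg (Complex.exp ((φ : ℂ) * Complex.I) - 1)]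

lemma abs_sum_exp (K : ℕ) (θ : ℝ) (hθ : Real.sin (θ / 2) ≠ 0) :
    ‖∑ m ∈ Finset.range K, Complex.exp (-((θ : ℂ) * m) * Complex.I)‖
      = |Real.sin (K * θ / 2) / Real.sin (θ / 2)| := by
  set z := Complex.exp (-(θ : ℂ) * Complex.I) with hz
  have hzm : ∀ m : ℕ, Complex.exp (-((θ : ℂ) * m) * Complex.I) = z ^ m := by
    intro m
    rw [hz, ← Complex.exp_nat_mul]
    ring_nf
  have hz1 : z ≠ 1 := by
    intro h
    rw [hz, Complex.exp_eq_one_iff] at h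
    obtain ⟨n, hn⟩ := h
    have him := congrArg Complex.im hn
    simp [Complex.mul_im] at him
    apply hθ
    have : θ / 2 = (-n) * Real.pi := by nlinarith [him]
    rw [this]
    simpa using Real.sin_int_mul_pi (-n)
  calc ‖∑ m ∈ Finset.range K, Complex.exp (-((θ : ℂ) * m) * Complex.I)‖
      = ‖∑ m ∈ Finset.range K, z ^ m‖ := by
        congr 1; exact Finset.sum_congr rfl fun m _ => hzm m
    _ = ‖(z ^ K - 1) / (z - 1)‖ := by rw [geom_sum_eq hz1]
    _ = ‖z ^ K - 1‖ / ‖z - 1‖ := norm_div _ _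
    _ = (2 * |Real.sin (-(K * θ) / 2)|) / (2 * |Real.sin (-θ / 2)|) := by
        rw [show z ^ K = Complex.exp (((-(K * θ) : ℝ) : ℂ) * Complex.I) by
              rw [hz, ← Complex.exp_nat_mul]; push_cast; ring_nf,
            show z = Complex.exp (((-θ : ℝ) : ℂ) * Complex.I) by rw [hz]; push_cast; rfl,
            abs_exp_mul_I_sub_one, abs_exp_mul_I_sub_one]
    _ = |Real.sin (K * θ / 2) / Real.sin (θ / 2)| := by
        rw [abs_div]
        rw [show -(K * θ) / 2 = -(K * θ / 2) by ring, show -θ/2 = -(θ/2) by ring,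
          Real.sin_neg, Real.sin_neg, abs_neg, abs_neg]
        field_simp

lemma sum_exp_eq_zero (K w : ℕ) (hw0 : 0 < w) (hwK : w < K) :
    ∑ m ∈ Finset.range K, Complex.exp (-(((2 * Real.pi * w / K : ℝ) : ℂ) * m) * Complex.I) = 0 := by
  have hK0 : 0 < K := lt_trans hw0 hwK
  set θ : ℝ := 2 * Real.pi * w / K with hθ
  set z := Complex.exp (-(θ : ℂ) * Complex.I) with hz
  have hzm : ∀ m : ℕ, Complex.exp (-((θ : ℂ) * m) * Complex.I) = z ^ m := by
    intro m; rw [hz, ← Complex.exp_nat_mul]; ring_nf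
  have hsin : Real.sin (θ / 2) ≠ 0 := by
    have h1 : θ / 2 = Real.pi * w / K := by rw [hθ]; ring
    rw [h1]
    have hlt : Real.pi * w / K < Real.pi := by
      rw [div_lt_iff₀ (by positivity)]
      have : (w:ℝ) < K := by exact_mod_cast hwK
      nlinarith [Real.pi_pos]
    have hgt : 0 < Real.pi * w / K := by positivity
    exact ne_of_gt (Real.sin_pos_of_pos_of_lt_pi hgt hlt)
  have hz1 : z ≠ 1 := by
    intro h
    rw [hz, Complex.exp_eq_one_iff] at h
    obtain ⟨n, hn⟩ := h
    have him := congrArg Complex.im hn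
    simp [Complex.mul_im] at him
    apply hsin
    have : θ / 2 = (-n) * Real.pi := by nlinarith [him]
    rw [this]
    simpa using Real.sin_int_mul_pi (-n)
  have hzK : z ^ K = 1 := by
    rw [hz, ← Complex.exp_nat_mul]
    have heq : (K:ℂ) * (-(θ:ℂ) * Complex.I) = (-(w:ℤ) : ℤ) * (2 * Real.pi * Complex.I) := by
      rw [hθ]
      have hKne : (K:ℂ) ≠ 0 := by exact_mod_cast Nat.cast_ne_zero.mpr hK0.ne'
      push_cast
      field_simp
    rw [heq]
    exact Complex.exp_int_mul_two_pi_mul_I _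
  have hc := Finset.sum_congr rfl fun m (_ : m ∈ Finset.range K) => hzm m
  rw [hc, geom_sum_eq hz1, hzK]
  simp

lemma sin_ne_zero_of_not_dvd (K w : ℕ) (hK : 0 < K) (h : ¬ (K : ℤ) ∣ (w : ℤ)) :
    Real.sin (2 * Real.pi * w / K / 2) ≠ 0 := by
  intro hs
  rw [Real.sin_eq_zero_iff] at hs
  obtain ⟨n, hn⟩ := hs
  apply h
  refine ⟨n, ?_⟩
  have hKR : (K:ℝ) ≠ 0 := Nat.cast_ne_zero.mpr hK.ne'
  have hpi := Real.pi_ne_zero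
  have h2 : (2 * Real.pi) * ((K:ℝ) * n) = (2 * Real.pi) * w := by
    field_simp at hn
    rw [← hn]; ring
  have : (w : ℝ) = (K : ℝ) * n :=
    (mul_left_cancel₀ (by positivity : (2 * Real.pi : ℝ) ≠ 0) h2).symm
  exact_mod_cast this

lemma int_sum {Ω : Type*} [MeasureSpace Ω] (P : Measure Ω) (K L : ℕ)
    (g : Fin K × Fin L → Ω → ℝ) (hg : ∀ p, Integrable (g p) P)
    (c : Fin K → Fin L → ℂ) :
    ∫ ω, ∑ m : Fin K, ∑ n : Fin L, (g (m, n) ω : ℂ) * c m n ∂P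
      = ∑ m : Fin K, ∑ n : Fin L, ((∫ ω, g (m, n) ω ∂P : ℝ) : ℂ) * c m n := by
  have h1 : ∀ (p : Fin K × Fin L),
      Integrable (fun ω => (g p ω : ℂ) * c p.1 p.2) P := by
    intro p
    simpa [Complex.real_smul] using ((hg p).smul_const (c p.1 p.2))
  calc ∫ ω, ∑ m : Fin K, ∑ n : Fin L, (g (m, n) ω : ℂ) * c m n ∂P
      = ∫ ω, ∑ p : Fin K × Fin L, (g p ω : ℂ) * c p.1 p.2 ∂P := by
        congr 1; funext ω; rw [Fintype.sum_prod_type]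
    _ = ∑ p : Fin K × Fin L, ∫ ω, (g p ω : ℂ) * c p.1 p.2 ∂P :=
        integral_finset_sum _ (fun p _ => h1 p)
    _ = ∑ m : Fin K, ∑ n : Fin L, ((∫ ω, g (m, n) ω ∂P : ℝ) : ℂ) * c m n := by
        rw [Fintype.sum_prod_type]
        refine Finset.sum_congr rfl fun m _ => Finset.sum_congr rfl fun n _ => ?_
        have heq : (fun ω => ((g (m, n) ω : ℂ)) * c m n) = fun ω => g (m, n) ω • c m n := by
          funext ω; simp [Complex.real_smul]
        rw [heq, integral_smul_const, Complex.real_smul]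

/-- Zero-padding spectrum (in-band): padding a random `M × N` feature map with mean-`a`
entries to size `M' × N'` changes the expected DFT at an in-band frequency `(u,v)`
(with `u/M'`, `v/N'` non-integer) by
`|a|·(|sin(Muπ/M')/sin(uπ/M')|·|sin(Nvπ/N')/sin(vπ/N')| − MN·δ_{uv})` in magnitude. -/
theorem zero_padding_inband (M N M' N' : ℕ)
    (hM : 0 < M) (hN : 0 < N) (hMM' : M ≤ M') (hNN' : N ≤ N')
    {Ω : Type*} [MeasureSpace Ω] (P : Measure Ω) [IsProbabilityMeasure P]
    (a : ℝ)
    (F : Fin M × Fin N → Ω → ℝ)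
    (hint : ∀ mn, Integrable (F mn) P)
    (hmean : ∀ mn, (∫ ω, F mn ω ∂P) = a)
    (Ftilde : Fin M' × Fin N' → Ω → ℝ)
    (hFt : ∀ (m : Fin M') (n : Fin N') (ω : Ω), Ftilde (m, n) ω =
      if h : (m : ℕ) < M ∧ (n : ℕ) < N then F (⟨m, h.1⟩, ⟨n, h.2⟩) ω else 0)
    (u v : ℕ) (hu : u < M) (hv : v < N)
    (hu' : ¬ (M' : ℤ) ∣ (u : ℤ)) (hv' : ¬ (N' : ℤ) ∣ (v : ℤ)) :
    ‖((∫ ω, ∑ m : Fin M', ∑ n : Fin N', (Ftilde (m, n) ω : ℂ) *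
            Complex.exp (-Complex.I *
              ((u : ℂ) * ((m : ℕ) : ℂ) / M' + (v : ℂ) * ((n : ℕ) : ℂ) / N') *
              (2 * Real.pi)) ∂P) -
          (∫ ω, ∑ m : Fin M, ∑ n : Fin N, (F (m, n) ω : ℂ) *
            Complex.exp (-Complex.I *
              ((u : ℂ) * ((m : ℕ) : ℂ) / M + (v : ℂ) * ((n : ℕ) : ℂ) / N) *
              (2 * Real.pi)) ∂P))‖ =
      |a| * (|Real.sin (M * u * Real.pi / M') / Real.sin (u * Real.pi / M')| *
          |Real.sin (N * v * Real.pi / N') / Real.sin (v * Real.pi / N')| -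
        (M : ℝ) * N * (if u = 0 ∧ v = 0 then 1 else 0)) := by
  have hM'0 : 0 < M' := lt_of_lt_of_le hM hMM'
  have hN'0 : 0 < N' := lt_of_lt_of_le hN hNN'
  have hu0 : 0 < u := by
    rcases Nat.eq_zero_or_pos u with h | h
    · exact absurd (h ▸ dvd_zero (M':ℤ) : (M':ℤ) ∣ (u:ℤ)) hu'
    · exact h
  have hv0 : 0 < v := by
    rcases Nat.eq_zero_or_pos v with h | h
    · exact absurd (h ▸ dvd_zero (N':ℤ) : (N':ℤ) ∣ (v:ℤ)) hv'
    · exact h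
  have hif : (if u = 0 ∧ v = 0 then (1:ℝ) else 0) = 0 :=
    if_neg (fun h => hu0.ne' h.1)
  -- integrability of Ftilde
  have hint' : ∀ p : Fin M' × Fin N', Integrable (Ftilde p) P := by
    rintro ⟨m, n⟩
    have heq : Ftilde (m, n) = fun ω =>
        if h : (m : ℕ) < M ∧ (n : ℕ) < N then F (⟨m, h.1⟩, ⟨n, h.2⟩) ω else 0 :=
      funext (hFt m n)
    rw [heq]
    by_cases h : (m : ℕ) < M ∧ (n : ℕ) < N
    · simp only [dif_pos h]; exact hint _
    · simp only [dif_neg h]; exact integrable_const 0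
  have hmeanFt : ∀ (m : Fin M') (n : Fin N'),
      (∫ ω, Ftilde (m, n) ω ∂P) = if (m : ℕ) < M ∧ (n : ℕ) < N then a else 0 := by
    intro m n
    have heq : (fun ω => Ftilde (m, n) ω) = fun ω =>
        if h : (m : ℕ) < M ∧ (n : ℕ) < N then F (⟨m, h.1⟩, ⟨n, h.2⟩) ω else 0 :=
      funext (hFt m n)
    rw [heq]
    by_cases h : (m : ℕ) < M ∧ (n : ℕ) < N
    · simp only [dif_pos h, if_pos h]; exact hmean _
    · simp only [dif_neg h, if_neg h]; exact integral_zero _ _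
  set θ1 : ℝ := 2 * Real.pi * u / M' with hθ1
  set θ2 : ℝ := 2 * Real.pi * v / N' with hθ2
  set SM : ℂ := ∑ m ∈ Finset.range M, Complex.exp (-((θ1 : ℂ) * m) * Complex.I) with hSM
  set SN : ℂ := ∑ n ∈ Finset.range N, Complex.exp (-((θ2 : ℂ) * n) * Complex.I) with hSN
  -- the H integral
  have hH : (∫ ω, ∑ m : Fin M', ∑ n : Fin N', (Ftilde (m, n) ω : ℂ) *
      Complex.exp (-Complex.I *
        ((u : ℂ) * ((m : ℕ) : ℂ) / M' + (v : ℂ) * ((n : ℕ) : ℂ) / N') *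
        (2 * Real.pi)) ∂P) = (a : ℂ) * (SM * SN) := by
    rw [int_sum P M' N' Ftilde hint'
      (fun m n => Complex.exp (-Complex.I *
        ((u : ℂ) * ((m : ℕ) : ℂ) / M' + (v : ℂ) * ((n : ℕ) : ℂ) / N') * (2 * Real.pi)))]
    have step1 : ∀ (m : Fin M') (n : Fin N'),
        ((∫ ω, Ftilde (m, n) ω ∂P : ℝ) : ℂ) *
          Complex.exp (-Complex.I *
            ((u : ℂ) * ((m : ℕ) : ℂ) / M' + (v : ℂ) * ((n : ℕ) : ℂ) / N') * (2 * Real.pi))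
        = (fun (m n : ℕ) => (if m < M ∧ n < N then (a:ℂ) else 0) *
            Complex.exp (-Complex.I *
              ((u : ℂ) * (m : ℂ) / M' + (v : ℂ) * (n : ℂ) / N') * (2 * Real.pi))) (m : ℕ) (n : ℕ) := by
      intro m n
      rw [hmeanFt m n]
      by_cases h : (m : ℕ) < M ∧ (n : ℕ) < N <;> simp [h]
    calc (∑ m : Fin M', ∑ n : Fin N', ((∫ ω, Ftilde (m, n) ω ∂P : ℝ) : ℂ) *
          Complex.exp (-Complex.I *
            ((u : ℂ) * ((m : ℕ) : ℂ) / M' + (v : ℂ) * ((n : ℕ) : ℂ) / N') * (2 * Real.pi)))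
        = ∑ m ∈ Finset.range M', ∑ n ∈ Finset.range N',
            (if m < M ∧ n < N then (a:ℂ) else 0) *
              Complex.exp (-Complex.I *
                ((u : ℂ) * (m : ℂ) / M' + (v : ℂ) * (n : ℂ) / N') * (2 * Real.pi)) := by
          rw [← Fin.sum_univ_eq_sum_range (fun m => ∑ n ∈ Finset.range N',
            (if m < M ∧ n < N then (a:ℂ) else 0) *
              Complex.exp (-Complex.I *
                ((u : ℂ) * (m : ℂ) / M' + (v : ℂ) * (n : ℂ) / N') * (2 * Real.pi))) M']
          refine Finset.sum_congr rfl fun m _ => ?_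
          rw [← Fin.sum_univ_eq_sum_range (fun n =>
            (if (m:ℕ) < M ∧ n < N then (a:ℂ) else 0) *
              Complex.exp (-Complex.I *
                ((u : ℂ) * ((m:ℕ) : ℂ) / M' + (v : ℂ) * (n : ℂ) / N') * (2 * Real.pi))) N']
          exact Finset.sum_congr rfl fun n _ => step1 m n
      _ = ∑ m ∈ Finset.range M, ∑ n ∈ Finset.range N,
            (a:ℂ) * (Complex.exp (-((θ1 : ℂ) * m) * Complex.I) *
              Complex.exp (-((θ2 : ℂ) * n) * Complex.I)) := by
          rw [← Finset.sum_subset (Finset.range_subset_range.mpr hMM')]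
          · refine Finset.sum_congr rfl fun m hm => ?_
            have hmM : m < M := Finset.mem_range.mp hm
            rw [← Finset.sum_subset (Finset.range_subset_range.mpr hNN')]
            · refine Finset.sum_congr rfl fun n hn => ?_
              have hnN : n < N := Finset.mem_range.mp hn
              rw [if_pos ⟨hmM, hnN⟩, ← Complex.exp_add]
              congr 2
              rw [hθ1, hθ2]
              have hM'ne : (M':ℂ) ≠ 0 := Nat.cast_ne_zero.mpr hM'0.ne'
              have hN'ne : (N':ℂ) ≠ 0 := Nat.cast_ne_zero.mpr hN'0.ne'
              push_cast
              field_simp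
              ring
            · intro n _ hn
              rw [if_neg (fun h => hn (Finset.mem_range.mpr h.2))]
              exact zero_mul _
          · intro m _ hm
            refine Finset.sum_eq_zero fun n _ => ?_
            rw [if_neg (fun h => hm (Finset.mem_range.mpr h.1))]
            exact zero_mul _
      _ = (a : ℂ) * (SM * SN) := by
          rw [hSM, hSN, Finset.sum_mul_sum, Finset.mul_sum]
          exact Finset.sum_congr rfl fun m _ => by
            rw [Finset.mul_sum]
  -- the G integral is zero
  have hG : (∫ ω, ∑ m : Fin M, ∑ n : Fin N, (F (m, n) ω : ℂ) *
      Complex.exp (-Complex.I *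
        ((u : ℂ) * ((m : ℕ) : ℂ) / M + (v : ℂ) * ((n : ℕ) : ℂ) / N) *
        (2 * Real.pi)) ∂P) = 0 := by
    rw [int_sum P M N F hint
      (fun m n => Complex.exp (-Complex.I *
        ((u : ℂ) * ((m : ℕ) : ℂ) / M + (v : ℂ) * ((n : ℕ) : ℂ) / N) * (2 * Real.pi)))]
    have hMne : (M:ℂ) ≠ 0 := Nat.cast_ne_zero.mpr hM.ne'
    have hNne : (N:ℂ) ≠ 0 := Nat.cast_ne_zero.mpr hN.ne'
    calc (∑ m : Fin M, ∑ n : Fin N, ((∫ ω, F (m, n) ω ∂P : ℝ) : ℂ) *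
          Complex.exp (-Complex.I *
            ((u : ℂ) * ((m : ℕ) : ℂ) / M + (v : ℂ) * ((n : ℕ) : ℂ) / N) * (2 * Real.pi)))
        = ∑ m ∈ Finset.range M, ∑ n ∈ Finset.range N,
            (a:ℂ) * (Complex.exp (-(((2 * Real.pi * u / M : ℝ) : ℂ) * m) * Complex.I) *
              Complex.exp (-(((2 * Real.pi * v / N : ℝ) : ℂ) * n) * Complex.I)) := by
          rw [← Fin.sum_univ_eq_sum_range (fun m => ∑ n ∈ Finset.range N,
            (a:ℂ) * (Complex.exp (-(((2 * Real.pi * u / M : ℝ) : ℂ) * m) * Complex.I) *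
              Complex.exp (-(((2 * Real.pi * v / N : ℝ) : ℂ) * n) * Complex.I))) M]
          refine Finset.sum_congr rfl fun m _ => ?_
          rw [← Fin.sum_univ_eq_sum_range (fun n =>
            (a:ℂ) * (Complex.exp (-(((2 * Real.pi * u / M : ℝ) : ℂ) * (m:ℕ)) * Complex.I) *
              Complex.exp (-(((2 * Real.pi * v / N : ℝ) : ℂ) * n) * Complex.I))) N]
          refine Finset.sum_congr rfl fun n _ => ?_
          rw [hmean (m, n), ← Complex.exp_add]
          congr 2
          push_cast
          field_simp
          ring
      _ = (a:ℂ) * ((∑ m ∈ Finset.range M,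
              Complex.exp (-(((2 * Real.pi * u / M : ℝ) : ℂ) * m) * Complex.I)) *
            (∑ n ∈ Finset.range N,
              Complex.exp (-(((2 * Real.pi * v / N : ℝ) : ℂ) * n) * Complex.I))) := by
          rw [Finset.sum_mul_sum, Finset.mul_sum]
          exact Finset.sum_congr rfl fun m _ => by rw [Finset.mul_sum]
      _ = 0 := by
          rw [sum_exp_eq_zero M u hu0 hu]
          simp
  rw [hH, hG, sub_zero, hif]
  rw [norm_mul, norm_mul, Complex.norm_real, Real.norm_eq_abs]
  rw [hSM, hSN, abs_sum_exp M θ1 (by rw [hθ1]; exact sin_ne_zero_of_not_dvd M' u hM'0 hu'),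
    abs_sum_exp N θ2 (by rw [hθ2]; exact sin_ne_zero_of_not_dvd N' v hN'0 hv')]
  rw [hθ1, hθ2]
  have e1 : (M:ℝ) * (2 * Real.pi * u / M') / 2 = M * u * Real.pi / M' := by ring
  have e2 : 2 * Real.pi * u / M' / 2 = u * Real.pi / M' := by ring
  have e3 : (N:ℝ) * (2 * Real.pi * v / N') / 2 = N * v * Real.pi / N' := by ring
  have e4 : 2 * Real.pi * v / N' / 2 = v * Real.pi / N' := by ring
  rw [e1, e2, e3, e4]
  ring
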